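/- Let $E$ be a Banach space and $C\in(0,1]$. If $E$ is an $M(1,C)$-ideal in $E^{**}$ (under the canonical decomposition $E^{***}=E^*\oplus E^\perp$ with projection $\mathcal{Q}$ satisfying the $M(1,C)$-inequality), then for all $x\in S_E$, $x^{**}\in S_{E^{**}}$ and $\varepsilon>0$ there exists $x_0\in E$ with $\|x+Cx^{**}-x_0\|<1+\varepsilon$ and $\|-x+Cx^{**}-x_0\|<1+\varepsilon$. -/

import Mathlib

open NormedSpace

/-- Instance-finding repair: the operator norm on the triple dual (formerly found through
`NormedSpace.Dual`'s own instances). -/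
noncomputable instance tripleDualSeminormedAddCommGroup (𝕜 : Type*) [NontriviallyNormedField 𝕜]
    (E : Type*) [SeminormedAddCommGroup E] [NormedSpace 𝕜 E] :
    SeminormedAddCommGroup (StrongDual 𝕜 (StrongDual 𝕜 (StrongDual 𝕜 E))) :=
  ContinuousLinearMap.toSeminormedAddCommGroup (E := StrongDual 𝕜 (StrongDual 𝕜 E)) (F := 𝕜)
    (σ₁₂ := RingHom.id 𝕜)

/-- The canonical projection on `E***` with range (the canonical image of) `E*`
and kernel the annihilator of `E`. -/
noncomputable def triQ (E : Type*) [NormedAddCommGroup E] [NormedSpace ℝ E]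
    (f : StrongDual ℝ (StrongDual ℝ (StrongDual ℝ E))) : StrongDual ℝ (StrongDual ℝ (StrongDual ℝ E)) :=
  inclusionInDoubleDual ℝ (StrongDual ℝ E) (f.comp (inclusionInDoubleDual ℝ E))

/-- Separation lemma: if no point of the image of `T` lies within distance `r`
of both `a` and `b`, then there are functionals `f₁, f₂` separating. -/
lemma sep_lemma {D G : Type*} [NormedAddCommGroup D] [NormedSpace ℝ D]
    [AddCommGroup G] [Module ℝ G] (T : G →ₗ[ℝ] D) (a b : D) (r : ℝ) (hr : 0 < r)
    (h : ∀ g : G, ¬(‖a - T g‖ < r ∧ ‖b - T g‖ < r)) :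
    ∃ (f₁ f₂ : StrongDual ℝ D) (u : ℝ), 0 < u ∧ u ≤ f₁ a + f₂ b ∧
      (∀ g : G, f₁ (T g) + f₂ (T g) = 0) ∧
      ∀ y z : D, ‖y‖ < r → ‖z‖ < r → f₁ y + f₂ z < u := by
  have hdisj : Disjoint (Metric.ball (0 : D × D) r)
      ((fun g : G => (a - T g, b - T g)) '' Set.univ) := by
    rw [Set.disjoint_left]
    rintro p hp ⟨g, -, rfl⟩
    rw [Metric.mem_ball, dist_zero_right, Prod.norm_def, max_lt_iff] at hp
    exact h g ⟨hp.1, hp.2⟩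
  have hconv : Convex ℝ ((fun g : G => (a - T g, b - T g)) '' Set.univ) := by
    rintro p ⟨g₁, -, rfl⟩ q ⟨g₂, -, rfl⟩ s s' hs hs' hss'
    refine ⟨s • g₁ + s' • g₂, Set.mem_univ _, ?_⟩
    have key : ∀ c : D, s • (c - T g₁) + s' • (c - T g₂) = c - T (s • g₁ + s' • g₂) := by
      intro c
      rw [map_add, map_smul, map_smul]
      calc s • (c - T g₁) + s' • (c - T g₂)
          = (s + s') • c - (s • T g₁ + s' • T g₂) := by
            rw [add_smul, smul_sub, smul_sub]; abel
        _ = c - (s • T g₁ + s' • T g₂) := by rw [hss', one_smul]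
    simp only
    rw [Prod.smul_mk, Prod.smul_mk, Prod.mk_add_mk, key a, key b]
  obtain ⟨f, u, hfs, hft⟩ :=
    geometric_hahn_banach_open (convex_ball _ _) Metric.isOpen_ball hconv hdisj
  set f₁ : StrongDual ℝ D := f.comp (ContinuousLinearMap.inl ℝ D D) with hf₁
  set f₂ : StrongDual ℝ D := f.comp (ContinuousLinearMap.inr ℝ D D) with hf₂
  have hf12 : ∀ y z : D, f (y, z) = f₁ y + f₂ z := by
    intro y z
    have hsum : (y, z) = ((y, 0) : D × D) + (0, z) := by simp
    rw [hsum, map_add, hf₁, hf₂]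
    simp
  have hvan : ∀ g : G, f₁ (T g) + f₂ (T g) = 0 := by
    intro g
    by_contra hne
    have hbnd : ∀ c : ℝ, c * (f₁ (T g) + f₂ (T g)) ≤ f₁ a + f₂ b - u := by
      intro c
      have h' := hft _ ⟨c • g, Set.mem_univ _, rfl⟩
      rw [hf12] at h'
      simp only [map_sub, map_smul, smul_eq_mul] at h'
      nlinarith [h']
    have h1 := hbnd ((f₁ a + f₂ b - u + 1) / (f₁ (T g) + f₂ (T g)))
    rw [div_mul_cancel₀ _ hne] at h1
    linarith
  refine ⟨f₁, f₂, u, ?_, ?_, hvan, ?_⟩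
  · have := hfs 0 (Metric.mem_ball_self hr)
    simpa using this
  · have h' := hft _ ⟨(0 : G), Set.mem_univ _, rfl⟩
    rw [hf12] at h'
    simpa using h'
  · intro y z hy hz
    have hmem : ((y, z) : D × D) ∈ Metric.ball (0 : D × D) r := by
      rw [Metric.mem_ball, dist_zero_right, Prod.norm_def, max_lt_iff]
      exact ⟨hy, hz⟩
    have := hfs _ hmem
    rwa [hf12] at this

lemma dd_norm_smul {E : Type*} [NormedAddCommGroup E] [NormedSpace ℝ E] (c : ℝ)
    (y : StrongDual ℝ (StrongDual ℝ E)) : ‖c • y‖ = ‖c‖ * ‖y‖ := by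
  rcases eq_or_ne c 0 with rfl | hc
  · simp [ContinuousLinearMap.opNorm_zero]
  · apply le_antisymm (ContinuousLinearMap.opNorm_smul_le c y)
    have h := ContinuousLinearMap.opNorm_smul_le c⁻¹ (c • y)
    rw [smul_smul, inv_mul_cancel₀ hc, one_smul, norm_inv] at h
    have hc' : 0 < ‖c‖ := norm_pos_iff.mpr hc
    calc ‖c‖ * ‖y‖ ≤ ‖c‖ * (‖c‖⁻¹ * ‖c • y‖) := by gcongr
      _ = ‖c • y‖ := by field_simp

lemma td_le_opNorm {E : Type*} [NormedAddCommGroup E] [NormedSpace ℝ E]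
    (g : StrongDual ℝ (StrongDual ℝ (StrongDual ℝ E))) (y : StrongDual ℝ (StrongDual ℝ E)) :
    ‖g y‖ ≤ ‖g‖ * ‖y‖ := by
  exact ContinuousLinearMap.le_opNorm (E := StrongDual ℝ (StrongDual ℝ E)) (F := ℝ)
    (σ₁₂ := RingHom.id ℝ) g y

lemma td_opNorm_le_bound {E : Type*} [NormedAddCommGroup E] [NormedSpace ℝ E]
    (g : StrongDual ℝ (StrongDual ℝ (StrongDual ℝ E))) {M : ℝ} (hM : 0 ≤ M)
    (h : ∀ y : StrongDual ℝ (StrongDual ℝ E), ‖g y‖ ≤ M * ‖y‖) : ‖g‖ ≤ M := by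
  exact ContinuousLinearMap.opNorm_le_bound (E := StrongDual ℝ (StrongDual ℝ E)) (F := ℝ)
    (σ₁₂ := RingHom.id ℝ) g hM h

set_option maxHeartbeats 4000000 in
theorem stmt7 {E : Type*} [NormedAddCommGroup E] [NormedSpace ℝ E] [CompleteSpace E]
    (C : ℝ) (hC0 : 0 < C) (hC1 : C ≤ 1)
    (hM1C : ∀ f : StrongDual ℝ (StrongDual ℝ (StrongDual ℝ E)),
      ‖triQ E f‖ + C * ‖f - triQ E f‖ ≤ ‖f‖) :
    ∀ x : E, ‖x‖ = 1 → ∀ xss : StrongDual ℝ (StrongDual ℝ E), ‖xss‖ = 1 → ∀ ε : ℝ, 0 < ε →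
      ∃ x₀ : E,
        ‖inclusionInDoubleDual ℝ E x + C • xss - inclusionInDoubleDual ℝ E x₀‖ < 1 + ε ∧
        ‖-(inclusionInDoubleDual ℝ E x) + C • xss - inclusionInDoubleDual ℝ E x₀‖ < 1 + ε := by
  intro x hx xss hxss ε hε
  by_contra hcon
  obtain ⟨f₁, f₂, u, hu0, h0, hvan, hball⟩ :=
    sep_lemma ((inclusionInDoubleDual ℝ E).toLinearMap)
      (inclusionInDoubleDual ℝ E x + C • xss) (-(inclusionInDoubleDual ℝ E x) + C • xss)
      (1 + ε) (by linarith)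
      (by
        intro g hg
        exact hcon ⟨g, by simpa using hg.1, by simpa using hg.2⟩)
  -- f₁ + f₂ annihilates the image of E
  have hcomp : f₁.comp (inclusionInDoubleDual ℝ E) + f₂.comp (inclusionInDoubleDual ℝ E) = 0 := by
    ext g
    simpa using hvan g
  have hQ : triQ E f₁ + triQ E f₂ = 0 := by
    unfold triQ
    rw [← map_add, hcomp, map_zero]
  have hJx : ‖inclusionInDoubleDual ℝ E x‖ = 1 := by
    rw [show ‖inclusionInDoubleDual ℝ E x‖ = ‖x‖ from
      (inclusionInDoubleDualLi ℝ (E := E)).norm_map x, hx]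
  have hbound : ∀ (g : StrongDual ℝ (StrongDual ℝ (StrongDual ℝ E))) (y : StrongDual ℝ (StrongDual ℝ E)),
      ‖y‖ = 1 → g y ≤ ‖g‖ := by
    intro g y hy
    calc g y ≤ |g y| := le_abs_self _
      _ = ‖g y‖ := (Real.norm_eq_abs _).symm
      _ ≤ ‖g‖ * ‖y‖ := td_le_opNorm g y
      _ = ‖g‖ := by rw [hy, mul_one]
  have d1 : f₁ (inclusionInDoubleDual ℝ E x + C • xss)
      = f₁ (inclusionInDoubleDual ℝ E x) + C * f₁ xss := by
    rw [map_add, map_smul, smul_eq_mul]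
  have d2 : f₂ (-(inclusionInDoubleDual ℝ E x) + C • xss)
      = -(f₂ (inclusionInDoubleDual ℝ E x)) + C * f₂ xss := by
    rw [map_add, map_neg, map_smul, smul_eq_mul]
  have w1 : f₁ (inclusionInDoubleDual ℝ E x) = triQ E f₁ (inclusionInDoubleDual ℝ E x) := rfl
  have w2 : f₂ (inclusionInDoubleDual ℝ E x) = triQ E f₂ (inclusionInDoubleDual ℝ E x) := rfl
  have w3 : f₁ xss = (f₁ - triQ E f₁) xss + triQ E f₁ xss := by simp
  have w4 : f₂ xss = (f₂ - triQ E f₂) xss + triQ E f₂ xss := by simp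
  have w5 : triQ E f₁ xss + triQ E f₂ xss = 0 := by
    rw [← ContinuousLinearMap.add_apply, hQ, ContinuousLinearMap.zero_apply]
  have n1 : triQ E f₁ (inclusionInDoubleDual ℝ E x) ≤ ‖triQ E f₁‖ := hbound _ _ hJx
  have n2 : -(triQ E f₂ (inclusionInDoubleDual ℝ E x)) ≤ ‖triQ E f₂‖ := by
    have := hbound (-(triQ E f₂)) (inclusionInDoubleDual ℝ E x) hJx
    rw [show (-(triQ E f₂)) (inclusionInDoubleDual ℝ E x) = -(triQ E f₂ (inclusionInDoubleDual ℝ E x)) from rfl, norm_neg] at this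
    exact this
  have n3 : (f₁ - triQ E f₁) xss ≤ ‖f₁ - triQ E f₁‖ := hbound _ _ hxss
  have n4 : (f₂ - triQ E f₂) xss ≤ ‖f₂ - triQ E f₂‖ := hbound _ _ hxss
  have n5 : C * ((f₁ - triQ E f₁) xss + (f₂ - triQ E f₂) xss) ≤
      C * (‖f₁ - triQ E f₁‖ + ‖f₂ - triQ E f₂‖) :=
    mul_le_mul_of_nonneg_left (add_le_add n3 n4) hC0.le
  have m1 := hM1C f₁
  have m2 := hM1C f₂
  have hn : u ≤ ‖f₁‖ + ‖f₂‖ := by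
    have e : f₁ (inclusionInDoubleDual ℝ E x + C • xss)
        + f₂ (-(inclusionInDoubleDual ℝ E x) + C • xss)
        = (triQ E f₁ (inclusionInDoubleDual ℝ E x) - triQ E f₂ (inclusionInDoubleDual ℝ E x)) +
        C * ((f₁ - triQ E f₁) xss + (f₂ - triQ E f₂) xss) := by
      rw [d1, d2, w1, w2, w3, w4]
      linear_combination C * w5
    rw [e] at h0
    linarith [h0, n1, n2, n5, m1, m2]
  -- derive the contradiction
  have hN : 0 < ‖f₁‖ + ‖f₂‖ := lt_of_lt_of_le hu0 hn
  obtain ⟨δ, hδ, hδ8⟩ : ∃ δ : ℝ, 0 < δ ∧ δ * (8 * (1 + ε)) = ε * (‖f₁‖ + ‖f₂‖) :=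
    ⟨ε * (‖f₁‖ + ‖f₂‖) / (8 * (1 + ε)), by positivity, by field_simp⟩
  have hpick : ∀ g : StrongDual ℝ (StrongDual ℝ (StrongDual ℝ E)),
      ∃ y : StrongDual ℝ (StrongDual ℝ E), ‖y‖ ≤ 1 ∧ ‖g‖ - δ ≤ g y := by
    intro g
    rcases lt_or_ge (‖g‖ - δ) 0 with hlt | hge
    · exact ⟨0, by simp [ContinuousLinearMap.opNorm_zero], by simp; linarith⟩
    · by_contra hno
      push_neg at hno
      have hb2 : ∀ y : StrongDual ℝ (StrongDual ℝ E), ‖g y‖ ≤ (‖g‖ - δ) * ‖y‖ := by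
        intro y
        by_cases hy0 : y = 0
        · simp [hy0, ContinuousLinearMap.opNorm_zero]
        · have hny : (0:ℝ) < ‖y‖ :=
            lt_of_le_of_ne (norm_nonneg y) fun h => hy0 (y.opNorm_zero_iff.mp h.symm)
          have hw : ‖(‖y‖⁻¹ • y)‖ = 1 := by
            rw [dd_norm_smul, Real.norm_eq_abs, abs_of_pos (inv_pos.mpr hny),
              inv_mul_cancel₀ hny.ne']
          have h1 : g (‖y‖⁻¹ • y) < ‖g‖ - δ := hno _ hw.le
          have h2 : g (-(‖y‖⁻¹ • y)) < ‖g‖ - δ := hno _ (by rw [ContinuousLinearMap.opNorm_neg, hw])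
          rw [← neg_one_smul ℝ (‖y‖⁻¹ • y), ContinuousLinearMap.map_smul, smul_eq_mul, neg_one_mul] at h2
          have habs : ‖g (‖y‖⁻¹ • y)‖ ≤ ‖g‖ - δ := by
            rw [Real.norm_eq_abs, abs_le]
            constructor <;> linarith
          have hyy : y = ‖y‖ • (‖y‖⁻¹ • y) := by
            rw [smul_smul, mul_inv_cancel₀ hny.ne', one_smul]
          calc ‖g y‖ = ‖g (‖y‖ • (‖y‖⁻¹ • y))‖ := by rw [← hyy]
            _ = ‖y‖ * ‖g (‖y‖⁻¹ • y)‖ := by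
                rw [ContinuousLinearMap.map_smul, smul_eq_mul, Real.norm_eq_abs, Real.norm_eq_abs, abs_mul,
                  abs_of_pos hny]
            _ ≤ ‖y‖ * (‖g‖ - δ) := mul_le_mul_of_nonneg_left habs hny.le
            _ = (‖g‖ - δ) * ‖y‖ := by ring
      have := td_opNorm_le_bound g hge hb2
      linarith
  obtain ⟨y, hy1, hy2⟩ := hpick f₁
  obtain ⟨z, hz1, hz2⟩ := hpick f₂
  have hsc : ∀ w : StrongDual ℝ (StrongDual ℝ E), ‖w‖ ≤ 1 → ‖(1 + ε / 2) • w‖ < 1 + ε := by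
    intro w hw
    rw [dd_norm_smul, Real.norm_eq_abs, abs_of_pos (by linarith : (0:ℝ) < 1 + ε / 2)]
    have h2 : (ε / 2) * ‖w‖ ≤ (ε / 2) * 1 := mul_le_mul_of_nonneg_left hw (by positivity)
    nlinarith [norm_nonneg w]
  have hlt := hball _ _ (hsc y hy1) (hsc z hz1)
  rw [ContinuousLinearMap.map_smul, ContinuousLinearMap.map_smul, smul_eq_mul, smul_eq_mul] at hlt
  have hprod : (1 + ε / 2) * ((‖f₁‖ - δ) + (‖f₂‖ - δ)) ≤ (1 + ε / 2) * (f₁ y + f₂ z) :=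
    mul_le_mul_of_nonneg_left (add_le_add hy2 hz2) (by linarith)
  have hεδ : 0 ≤ ε * δ := (mul_pos hε hδ).le
  generalize hPdef : f₁ y = P at hlt hprod
  generalize hQdef : f₂ z = Q at hlt hprod
  generalize hF1 : ‖f₁‖ = F1 at hn hprod hδ8
  generalize hF2 : ‖f₂‖ = F2 at hn hprod hδ8
  nlinarith [hlt, hprod, hn, hδ8, hδ.le, hεδ, hε.le]
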